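/- Let H be a complex Hilbert space and T : H → H a bounded self-adjoint linear operator with ‖T‖ ≤ 1 such that neither 1 nor −1 is an eigenvalue of T (ker(I − T) = ker(I + T) = {0}). Then for every x ∈ H, the powers T^k x converge to 0 in norm as k → ∞. -/

import Mathlib

open Filter

open scoped InnerProductSpace in
/-- A self-adjoint non-expansive operator on a complex Hilbert space such that
neither `1` nor `-1` is an eigenvalue satisfies `T^k x → 0` for every `x`. -/
theorem stmt_6 {H : Type*} [NormedAddCommGroup H] [InnerProductSpace ℂ H]
    [CompleteSpace H] (T : H →L[ℂ] H) (hsa : IsSelfAdjoint T) (hT : ‖T‖ ≤ 1)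
    (hker1 : LinearMap.ker (((1 : H →L[ℂ] H) - T : H →L[ℂ] H) : H →ₗ[ℂ] H) = ⊥)
    (hker2 : LinearMap.ker (((1 : H →L[ℂ] H) + T : H →L[ℂ] H) : H →ₗ[ℂ] H) = ⊥) :
    ∀ x : H, Tendsto (fun k : ℕ => (T ^ k) x) atTop (nhds 0) := by
  intro x
  set b : ℕ → ℝ := fun k => ‖(T ^ k) x‖ ^ 2 with hb
  have hb_nonneg : ∀ k, 0 ≤ b k := fun k => sq_nonneg _
  -- b is antitone
  have hstep : ∀ k, b (k + 1) ≤ b k := by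
    intro k
    have h1 : ‖(T ^ (k + 1)) x‖ ≤ ‖(T ^ k) x‖ := by
      have h0 : (T ^ (k + 1)) x = T ((T ^ k) x) := by
        rw [pow_succ', ContinuousLinearMap.mul_apply]
      rw [h0]
      calc ‖T ((T ^ k) x)‖ ≤ ‖T‖ * ‖(T ^ k) x‖ := T.le_opNorm _
        _ ≤ 1 * ‖(T ^ k) x‖ := mul_le_mul_of_nonneg_right hT (norm_nonneg _)
        _ = ‖(T ^ k) x‖ := one_mul _
    exact pow_le_pow_left₀ (norm_nonneg _) h1 2
  have hb_anti : Antitone b := antitone_nat_of_succ_le hstep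
  have hsym : ∀ n : ℕ, ((T ^ n : H →L[ℂ] H) : H →ₗ[ℂ] H).IsSymmetric :=
    fun n => (hsa.pow n).isSymmetric
  -- key inner product identity for even powers
  have hkey : ∀ k m : ℕ, (⟪(T ^ (2 * k)) x, (T ^ (2 * m)) x⟫_ℂ : ℂ) = (b (k + m) : ℂ) := by
    intro k m
    have h1 : (⟪(T ^ (2 * k)) x, (T ^ (2 * m)) x⟫_ℂ : ℂ)
        = ⟪(T ^ (k + m)) x, (T ^ (k + m)) x⟫_ℂ := by
      have e1 := hsym (2 * m) ((T ^ (2 * k)) x) x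
      simp only [ContinuousLinearMap.coe_coe] at e1
      have e2 := hsym (k + m) ((T ^ (k + m)) x) x
      simp only [ContinuousLinearMap.coe_coe] at e2
      rw [← e1, ← e2]
      congr 1
      rw [← ContinuousLinearMap.comp_apply, ← ContinuousLinearMap.mul_def, ← pow_add,
        ← ContinuousLinearMap.comp_apply, ← ContinuousLinearMap.mul_def, ← pow_add]
      ring_nf
    rw [h1, inner_self_eq_norm_sq_to_K]
    norm_cast
  -- re of inner equals b
  have hre : ∀ k m : ℕ, RCLike.re (⟪(T ^ (2 * k)) x, (T ^ (2 * m)) x⟫_ℂ : ℂ) = b (k + m) := by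
    intro k m; rw [hkey]; simp
  -- b converges
  have hbdd : BddBelow (Set.range b) := ⟨0, by rintro _ ⟨k, rfl⟩; exact hb_nonneg k⟩
  obtain ⟨L, hL⟩ : ∃ L, Tendsto b atTop (nhds L) :=
    ⟨_, tendsto_atTop_ciInf hb_anti hbdd⟩
  -- the even subsequence is Cauchy
  have hnormsub : ∀ k m : ℕ, ‖(T ^ (2 * k)) x - (T ^ (2 * m)) x‖ ^ 2
      = b (2 * k) - 2 * b (k + m) + b (2 * m) := by
    intro k m
    rw [@norm_sub_sq ℂ, hre]
  have hcauchy : CauchySeq (fun k : ℕ => (T ^ (2 * k)) x) := by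
    rw [Metric.cauchySeq_iff]
    intro ε hε
    have hδ : (0:ℝ) < ε ^ 2 / 4 := by positivity
    obtain ⟨N, hN⟩ := (Metric.tendsto_atTop.mp hL) (ε ^ 2 / 4) hδ
    refine ⟨N, fun k hk m hm => ?_⟩
    have h1 : |b (2 * k) - L| < ε ^ 2 / 4 := hN _ (le_trans hk (by omega))
    have h2 : |b (2 * m) - L| < ε ^ 2 / 4 := hN _ (le_trans hm (by omega))
    have h3 : |b (k + m) - L| < ε ^ 2 / 4 := hN _ (le_trans hk (by omega))
    have hsq : ‖(T ^ (2 * k)) x - (T ^ (2 * m)) x‖ ^ 2 < ε ^ 2 := by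
      rw [hnormsub]
      have a1 := abs_lt.mp h1
      have a2 := abs_lt.mp h2
      have a3 := abs_lt.mp h3
      nlinarith [hε.le]
    rw [dist_eq_norm]
    nlinarith [norm_nonneg ((T ^ (2 * k)) x - (T ^ (2 * m)) x), hε]
  obtain ⟨y, hy⟩ := cauchySeq_tendsto_of_complete hcauchy
  -- y is fixed by T^2
  have hfix : (T ^ 2) y = y := by
    have h1 : Tendsto (fun k : ℕ => (T ^ 2) ((T ^ (2 * k)) x)) atTop (nhds ((T ^ 2) y)) :=
      ((T ^ 2).continuous.tendsto y).comp hy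
    have h2 : Tendsto (fun k : ℕ => (T ^ 2) ((T ^ (2 * k)) x)) atTop (nhds y) := by
      have he : (fun k : ℕ => (T ^ 2) ((T ^ (2 * k)) x))
          = (fun k : ℕ => (T ^ (2 * k)) x) ∘ (fun k => k + 1) := by
        funext k
        simp only [Function.comp_apply]
        rw [← ContinuousLinearMap.comp_apply, ← ContinuousLinearMap.mul_def, ← pow_add]
        ring_nf
      rw [he]
      exact hy.comp (tendsto_add_atTop_nat 1)
    exact tendsto_nhds_unique h1 h2
  -- y = 0
  have hy0 : y = 0 := by
    have hz : ((1 : H →L[ℂ] H) + T) y ∈ LinearMap.ker (((1 : H →L[ℂ] H) - T : H →L[ℂ] H) : H →ₗ[ℂ] H) := by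
      rw [LinearMap.mem_ker]
      have : ((1 : H →L[ℂ] H) - T) (((1 : H →L[ℂ] H) + T) y) = y - (T ^ 2) y := by
        simp only [ContinuousLinearMap.sub_apply, ContinuousLinearMap.add_apply,
          ContinuousLinearMap.one_apply, pow_two, ContinuousLinearMap.mul_apply, map_add]
        abel
      rw [ContinuousLinearMap.coe_coe, this, hfix, sub_self]
    rw [hker1, Submodule.mem_bot] at hz
    have hz2 : y ∈ LinearMap.ker (((1 : H →L[ℂ] H) + T : H →L[ℂ] H) : H →ₗ[ℂ] H) := by
      rw [LinearMap.mem_ker]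
      exact hz
    rw [hker2, Submodule.mem_bot] at hz2
    exact hz2
  rw [hy0] at hy
  -- b(2k) → 0
  have hb2 : Tendsto (fun k : ℕ => b (2 * k)) atTop (nhds 0) := by
    have : Tendsto (fun k : ℕ => ‖(T ^ (2 * k)) x‖) atTop (nhds 0) :=
      tendsto_zero_iff_norm_tendsto_zero.mp hy
    have := this.pow 2
    simpa [hb] using this
  -- b → 0: the limit L must be 0
  have hL0 : L = 0 := by
    have h2k : Tendsto (fun k : ℕ => 2 * k) atTop atTop :=
      tendsto_atTop_mono (fun k => by simp only [id_eq]; omega) tendsto_id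
    exact tendsto_nhds_unique (hL.comp h2k) hb2
  have hb0 : Tendsto b atTop (nhds 0) := hL0 ▸ hL
  -- conclude
  rw [tendsto_zero_iff_norm_tendsto_zero]
  have : Tendsto (fun k : ℕ => Real.sqrt (b k)) atTop (nhds 0) := by
    have := (Real.continuous_sqrt.tendsto 0).comp hb0
    simpa [Function.comp_def] using this
  refine this.congr fun k => ?_
  exact Real.sqrt_sq (norm_nonneg _)
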